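/- Theorem 2. Let β ∈ [0,1], n ∈ ℕ, and let u : {k ∈ ℕ₀³ : k₁+k₂+k₃ ≤ n} → [0,∞] be a function such that, for every m ∈ {0,...,n}, the restriction of u to {k ∈ ℕ₀³ : k₁+k₂+k₃ = m} is an upper β-confidence bound for the parameter p ↦ min((1−p₂)/(1−p₁), 1) in the trinomial model (M_{m,p} : p ∈ Prob({1,2,3})), where x/0 := ∞ for x > 0. Then the function k ↦ u(k₁₀, k₀₁, k₁₁), defined on {k ∈ ℕ₀^({0,1}²) : k₊₊ = n}, is an upper β-confidence bound for the parameter (π,χ) ↦ χ^{(1)}_{1|1} in the restricted latent class model P_{2,≤}. -/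

import Mathlib

open scoped BigOperators ENNReal

noncomputable section

/-- `p` is a discrete probability density on the finite set `X`,
i.e. a function `X → [0,1]` summing to `1`. -/
def IsProb {X : Type*} [Fintype X] (p : X → ℝ) : Prop :=
  (∀ x, 0 ≤ p x ∧ p x ≤ 1) ∧ ∑ x, p x = 1

/-- `χ` is a Markov transition density: `χ x` is a probability density for each `x`. -/
def IsMarkov {X Y : Type*} [Fintype Y] (χ : X → Y → ℝ) : Prop :=
  ∀ x, IsProb (χ x)

/-- The mixture density `μ₁(π,χ)` on `{0,1}` (indices: `χ i j = χ_{j|i}`). -/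
def mu1 (π : Fin 2 → ℝ) (χ : Fin 2 → Fin 2 → ℝ) : Fin 2 → ℝ :=
  fun j => ∑ i, π i * χ i j

/-- The mixture density `μ₂(π,χ)` on `{0,1}²` (indices: `χ i j = χ_{j|i}`). -/
def mu2 (π : Fin 2 → ℝ) (χ : Fin 2 → Fin 2 × Fin 2 → ℝ) : Fin 2 × Fin 2 → ℝ :=
  fun j => ∑ i, π i * χ i j

/-- First-test characteristic: `chi1 χ i ι = χ^{(1)}_{ι|i} = χ_{ι0|i} + χ_{ι1|i}`. -/
def chi1 (χ : Fin 2 → Fin 2 × Fin 2 → ℝ) : Fin 2 → Fin 2 → ℝ :=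
  fun i ι => χ i (ι, 0) + χ i (ι, 1)

/-- Second-test characteristic: `chi2 χ i ι = χ^{(2)}_{ι|i} = χ_{0ι|i} + χ_{1ι|i}`. -/
def chi2 (χ : Fin 2 → Fin 2 × Fin 2 → ℝ) : Fin 2 → Fin 2 → ℝ :=
  fun i ι => χ i (0, ι) + χ i (1, ι)

/-- The multinomial point mass `M_{n,q}({k}) = n! ∏_x q_x^{k_x}/k_x!`. -/
def mPMF {X : Type*} [Fintype X] (n : ℕ) (q : X → ℝ) (k : X → ℕ) : ℝ :=
  (n.factorial : ℝ) * ∏ x, q x ^ k x / ((k x).factorial : ℝ)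

/-- `mProb n q S` is the probability, under the multinomial distribution `M_{n,q}`
(supported on `{k : Σ_x k_x = n}`), of the event `S`. -/
def mProb {X : Type*} [Fintype X] (n : ℕ) (q : X → ℝ) (S : Set (X → ℕ)) : ℝ :=
  ∑' k : X → ℕ, Set.indicator {k | (∑ x, k x) = n ∧ k ∈ S} (mPMF n q) k


namespace Stmt3Aux

lemma mPMF_nonneg {X : Type*} [Fintype X] {q : X → ℝ} (hq : ∀ x, 0 ≤ q x) (n : ℕ)
    (k : X → ℕ) : 0 ≤ mPMF n q k := by
  unfold mPMF
  apply mul_nonneg (by positivity)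
  apply Finset.prod_nonneg
  intro x _
  exact div_nonneg (pow_nonneg (hq x) _) (by positivity)

lemma mProb_eq_sum {X : Type*} [Fintype X] [DecidableEq X] (n N : ℕ) (hnN : n ≤ N)
    (q : X → ℝ) (S : Set (X → ℕ)) :
    mProb n q S = ∑ k ∈ Fintype.piFinset (fun _ : X => Finset.range (N+1)),
      Set.indicator {k | (∑ x, k x) = n ∧ k ∈ S} (mPMF n q) k := by
  apply tsum_eq_sum
  intro k hk
  rw [Fintype.mem_piFinset] at hk
  push_neg at hk
  obtain ⟨x, hx⟩ := hk
  rw [Finset.mem_range] at hx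
  apply Set.indicator_of_notMem
  rintro ⟨hsum, -⟩
  have : k x ≤ ∑ x, k x := Finset.single_le_sum (fun _ _ => Nat.zero_le _) (Finset.mem_univ x)
  omega

lemma mProb_nonneg {X : Type*} [Fintype X] (n : ℕ) {q : X → ℝ} (hq : ∀ x, 0 ≤ q x)
    (S : Set (X → ℕ)) : 0 ≤ mProb n q S := by
  classical
  rw [mProb_eq_sum n n le_rfl]
  exact Finset.sum_nonneg fun k _ => Set.indicator_nonneg (fun k _ => mPMF_nonneg hq n k) k

lemma mProb_mono {X : Type*} [Fintype X] (n : ℕ) {q : X → ℝ} (hq : ∀ x, 0 ≤ q x)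
    {S S' : Set (X → ℕ)} (h : S ⊆ S') : mProb n q S ≤ mProb n q S' := by
  classical
  rw [mProb_eq_sum n n le_rfl, mProb_eq_sum n n le_rfl]
  apply Finset.sum_le_sum
  intro k _
  by_cases hk : (∑ x, k x) = n ∧ k ∈ S
  · rw [Set.indicator_of_mem (show k ∈ {k | (∑ x, k x) = n ∧ k ∈ S} from hk),
      Set.indicator_of_mem (show k ∈ {k | (∑ x, k x) = n ∧ k ∈ S'} from ⟨hk.1, h hk.2⟩)]
  · rw [Set.indicator_of_notMem (show k ∉ {k | (∑ x, k x) = n ∧ k ∈ S} from hk)]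
    exact Set.indicator_nonneg (fun k _ => mPMF_nonneg hq n k) k


def G (a : ℕ) (j : Fin 3 → ℕ) : Fin 2 × Fin 2 → ℕ :=
  fun x => ![![a, j 1], ![j 0, j 2]] x.1 x.2

lemma sum_G (a : ℕ) (j : Fin 3 → ℕ) : ∑ x, G a j x = a + (j 0 + j 1 + j 2) := by
  simp [G, Fintype.sum_prod_type, Fin.sum_univ_two]
  ring

lemma tripleG (a : ℕ) (j : Fin 3 → ℕ) : ![G a j (1,0), G a j (0,1), G a j (1,1)] = j := by
  funext i
  fin_cases i <;> rfl

lemma triple_eq (k : Fin 2 × Fin 2 → ℕ) : G (k (0,0)) ![k (1,0), k (0,1), k (1,1)] = k := by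
  funext x
  obtain ⟨i, l⟩ := x
  fin_cases i <;> fin_cases l <;> rfl

lemma mPMF_G (n a m : ℕ) (j : Fin 3 → ℕ) (s : ℝ) (p : Fin 3 → ℝ) (q : Fin 2 × Fin 2 → ℝ)
    (h00 : q (0,0) = s) (h10 : q (1,0) = (1-s) * p 0) (h01 : q (0,1) = (1-s) * p 1)
    (h11 : q (1,1) = (1-s) * p 2) (hm : j 0 + j 1 + j 2 = m) (hmn : a + m = n) :
    mPMF n q (G a j) = (n.choose m : ℝ) * s ^ a * (1-s) ^ m * mPMF m p j := by
  have hfact : (n.factorial : ℝ) = (n.choose m : ℝ) * m.factorial * a.factorial := by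
    have := Nat.choose_mul_factorial_mul_factorial (show m ≤ n by omega)
    rw [show n - m = a by omega] at this
    exact_mod_cast this.symm
  subst hm
  simp only [mPMF, G, Fintype.prod_prod_type, Fin.prod_univ_two, Fin.prod_univ_three,
    Matrix.cons_val_zero, Matrix.cons_val_one, Matrix.head_cons, h00, h10, h01, h11]
  simp only [mul_pow]
  rw [hfact]
  have f0 : ((j 0).factorial : ℝ) ≠ 0 := by positivity
  have f1 : ((j 1).factorial : ℝ) ≠ 0 := by positivity
  have f2 : ((j 2).factorial : ℝ) ≠ 0 := by positivity
  have fa : ((a).factorial : ℝ) ≠ 0 := by positivity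
  field_simp
  ring

lemma decomp (n : ℕ) (q : Fin 2 × Fin 2 → ℝ) (s : ℝ) (p : Fin 3 → ℝ)
    (h00 : q (0,0) = s) (h10 : q (1,0) = (1-s) * p 0) (h01 : q (0,1) = (1-s) * p 1)
    (h11 : q (1,1) = (1-s) * p 2) (S : Set (Fin 3 → ℕ)) :
    mProb n q {k | ![k (1,0), k (0,1), k (1,1)] ∈ S}
      = ∑ m ∈ Finset.range (n+1),
          (n.choose m : ℝ) * s ^ (n-m) * (1-s) ^ m * mProb m p S := by
  classical
  set P3 := Fintype.piFinset (fun _ : Fin 3 => Finset.range (n+1)) with hP3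
  have hR : ∀ m ∈ Finset.range (n+1),
      (n.choose m : ℝ) * s ^ (n-m) * (1-s) ^ m * mProb m p S
      = ∑ j ∈ P3, (n.choose m : ℝ) * s ^ (n-m) * (1-s) ^ m *
          Set.indicator {j | (∑ x, j x) = m ∧ j ∈ S} (mPMF m p) j := by
    intro m hm
    rw [Finset.mem_range] at hm
    rw [mProb_eq_sum m n (by omega), Finset.mul_sum]
  rw [Finset.sum_congr rfl hR, mProb_eq_sum n n le_rfl]
  -- reindex the left side by (a, j) = (k (0,0), (k (1,0), k (0,1), k (1,1)))
  rw [Finset.sum_nbij'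
      (i := fun (k : Fin 2 × Fin 2 → ℕ) => ((k (0,0), ![k (1,0), k (0,1), k (1,1)]) : ℕ × (Fin 3 → ℕ)))
      (j := fun x : ℕ × (Fin 3 → ℕ) => G x.1 x.2)
      (t := (Finset.range (n+1)) ×ˢ P3)
      (g := fun x : ℕ × (Fin 3 → ℕ) =>
        Set.indicator {y : ℕ × (Fin 3 → ℕ) | y.1 + (y.2 0 + y.2 1 + y.2 2) = n ∧ y.2 ∈ S}
          (fun y => mPMF n q (G y.1 y.2)) x)
      ?_ ?_ ?_ ?_ ?_]
  · -- now: ∑ (a,j) in range × P3, F = ∑ m ∈ range, inner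
    rw [Finset.sum_product]
    apply Finset.sum_nbij' (i := fun a => n - a) (j := fun m => n - m)
    · intro a ha; simp only [Finset.mem_range] at *; omega
    · intro m hm; simp only [Finset.mem_range] at *; omega
    · intro a ha; simp only [Finset.mem_range] at ha; omega
    · intro m hm; simp only [Finset.mem_range] at hm; omega
    · intro a ha
      simp only [Finset.mem_range] at ha
      apply Finset.sum_congr rfl
      intro j hj
      by_cases hjS : j ∈ S
      · by_cases hsum : a + (j 0 + j 1 + j 2) = n
        · rw [Set.indicator_of_mem (show ((a, j) : ℕ × (Fin 3 → ℕ)) ∈ {y : ℕ × (Fin 3 → ℕ) | y.1 + (y.2 0 + y.2 1 + y.2 2) = n ∧ y.2 ∈ S} from ⟨hsum, hjS⟩),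
            Set.indicator_of_mem (show j ∈ {j : Fin 3 → ℕ | (∑ x, j x) = n - a ∧ j ∈ S} from
              ⟨by rw [Fin.sum_univ_three]; omega, hjS⟩)]
          rw [mPMF_G n a (n - a) j s p q h00 h10 h01 h11 (by omega) (by omega),
            show n - (n - a) = a by omega]
        · rw [Set.indicator_of_notMem (show ((a, j) : ℕ × (Fin 3 → ℕ)) ∉ {y : ℕ × (Fin 3 → ℕ) | y.1 + (y.2 0 + y.2 1 + y.2 2) = n ∧ y.2 ∈ S} from by
              rintro ⟨h1, -⟩; exact hsum h1),
            Set.indicator_of_notMem (show j ∉ {j : Fin 3 → ℕ | (∑ x, j x) = n - a ∧ j ∈ S} from by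
              rintro ⟨h1, -⟩; rw [Fin.sum_univ_three] at h1; omega)]
          ring
      · rw [Set.indicator_of_notMem (show ((a, j) : ℕ × (Fin 3 → ℕ)) ∉ {y : ℕ × (Fin 3 → ℕ) | y.1 + (y.2 0 + y.2 1 + y.2 2) = n ∧ y.2 ∈ S} from by
            rintro ⟨-, h2⟩; exact hjS h2),
          Set.indicator_of_notMem (show j ∉ {j : Fin 3 → ℕ | (∑ x, j x) = n - a ∧ j ∈ S} from by
            rintro ⟨-, h2⟩; exact hjS h2)]
        ring
  · -- hi
    intro k hk
    rw [Fintype.mem_piFinset] at hk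
    rw [Finset.mem_product]
    constructor
    · exact hk (0,0)
    · rw [Fintype.mem_piFinset]
      intro i
      fin_cases i <;> simp only [Matrix.cons_val_zero, Matrix.cons_val_one, Matrix.head_cons,
        Matrix.cons_val_two, Matrix.tail_cons] <;> exact hk _
  · -- hj
    intro x hx
    rw [Finset.mem_product] at hx
    rw [Fintype.mem_piFinset]
    intro y
    obtain ⟨i, l⟩ := y
    have h1 := hx.1
    have h2 := (Fintype.mem_piFinset).mp hx.2
    fin_cases i <;> fin_cases l <;>
      simp only [G, Matrix.cons_val_zero, Matrix.cons_val_one, Matrix.head_cons] <;>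
      first | exact h1 | exact h2 _
  · intro k _; exact triple_eq k
  · intro x hx
    obtain ⟨a, j⟩ := x
    simp only [Prod.mk.injEq]
    exact ⟨rfl, tripleG a j⟩
  · -- values agree
    intro k _
    try dsimp only
    by_cases hk : (∑ x, k x) = n ∧ k ∈ {k : Fin 2 × Fin 2 → ℕ | ![k (1,0), k (0,1), k (1,1)] ∈ S}
    · rw [Set.indicator_of_mem (show k ∈ {k : Fin 2 × Fin 2 → ℕ | (∑ x, k x) = n ∧ k ∈ {k : Fin 2 × Fin 2 → ℕ | ![k (1,0), k (0,1), k (1,1)] ∈ S}} from hk)]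
      rw [Set.indicator_of_mem (s := {y : ℕ × (Fin 3 → ℕ) | y.1 + (y.2 0 + y.2 1 + y.2 2) = n ∧ y.2 ∈ S})]
      · rw [triple_eq k]
      · refine ⟨?_, hk.2⟩
        have := sum_G (k (0,0)) ![k (1,0), k (0,1), k (1,1)]
        rw [triple_eq k] at this
        simp only [Matrix.cons_val_zero, Matrix.cons_val_one, Matrix.head_cons,
          Matrix.cons_val_two, Matrix.tail_cons] at this ⊢
        omega
    · rw [Set.indicator_of_notMem (show k ∉ {k : Fin 2 × Fin 2 → ℕ | (∑ x, k x) = n ∧ k ∈ {k : Fin 2 × Fin 2 → ℕ | ![k (1,0), k (0,1), k (1,1)] ∈ S}} from hk)]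
      rw [eq_comm, Set.indicator_apply_eq_zero.2]
      intro hmem
      exfalso
      apply hk
      obtain ⟨h1, h2⟩ := hmem
      refine ⟨?_, h2⟩
      have := sum_G (k (0,0)) ![k (1,0), k (0,1), k (1,1)]
      rw [triple_eq k] at this
      simp only [Matrix.cons_val_zero, Matrix.cons_val_one, Matrix.head_cons,
        Matrix.cons_val_two, Matrix.tail_cons] at this h1
      omega
end Stmt3Aux

open Stmt3Aux

/-- Theorem 2: if, for every sample size `m ≤ n`, `u` restricted to `{j : j₊ = m}` is
an upper β-confidence bound for `p ↦ min((1-p₂)/(1-p₁), 1)` (with `x/0 = ∞` for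
`x > 0`, realized by `ℝ≥0∞`-division) in the trinomial model, then
`k ↦ u(k₁₀, k₀₁, k₁₁)` is an upper β-confidence bound for the sensitivity
`(π,χ) ↦ χ^{(1)}_{1|1}` of the first test in the restricted latent class model. -/
theorem stmt_3 (β : ℝ) (hβ : β ∈ Set.Icc (0:ℝ) 1) (n : ℕ) (hn : 0 < n)
    (u : (Fin 3 → ℕ) → ℝ≥0∞)
    (hu : ∀ m : ℕ, m ≤ n → ∀ p : Fin 3 → ℝ, IsProb p →
      β ≤ mProb m p {j | min (ENNReal.ofReal (1 - p 1) / ENNReal.ofReal (1 - p 0)) 1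
        ≤ u j}) :
    ∀ π : Fin 2 → ℝ, ∀ χ : Fin 2 → Fin 2 × Fin 2 → ℝ, IsProb π → IsMarkov χ →
      chi1 χ 0 0 ≤ chi2 χ 0 0 →
      β ≤ mProb n (mu2 π χ)
        {k | ENNReal.ofReal (chi1 χ 1 1) ≤ u ![k (1, 0), k (0, 1), k (1, 1)]} := by
  intro π χ hπ hχ hord
  classical
  set q : Fin 2 × Fin 2 → ℝ := mu2 π χ with hqdef
  set c : ℝ := chi1 χ 1 1 with hcdef
  -- basic scalar facts
  have hπ0 : 0 ≤ π 0 := (hπ.1 0).1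
  have hπ1 : 0 ≤ π 1 := (hπ.1 1).1
  have hπsum : π 0 + π 1 = 1 := by
    have := hπ.2; rwa [Fin.sum_univ_two] at this
  have hrow : ∀ i, χ i (0,0) + χ i (0,1) + (χ i (1,0) + χ i (1,1)) = 1 := by
    intro i
    have := (hχ i).2
    rwa [Fintype.sum_prod_type, Fin.sum_univ_two, Fin.sum_univ_two, Fin.sum_univ_two] at this
  have hχn : ∀ i x, 0 ≤ χ i x := fun i x => ((hχ i).1 x).1
  have hqval : ∀ x, q x = π 0 * χ 0 x + π 1 * χ 1 x := by
    intro x; rw [hqdef]; unfold mu2; rw [Fin.sum_univ_two]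
  have hq_nonneg : ∀ x, 0 ≤ q x := by
    intro x; rw [hqval x]
    have := hχn 0 x; have := hχn 1 x; positivity
  have hqsum : q (0,0) + q (0,1) + q (1,0) + q (1,1) = 1 := by
    rw [hqval, hqval, hqval, hqval]
    linear_combination π 0 * hrow 0 + π 1 * hrow 1 + hπsum
  have hq1r : q 1 = q (1,1) := rfl
  have hc0 : 0 ≤ c := by
    rw [hcdef]; unfold chi1; have := hχn 1 (1,0); have := hχn 1 (1,1); positivity
  have hc1 : c ≤ 1 := by
    rw [hcdef]; unfold chi1
    have := hχn 1 (0,0); have := hχn 1 (0,1); have := hrow 1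
    push_cast at *
    linarith
  have hord' : χ 0 (0,1) ≤ χ 0 (1,0) := by
    unfold chi1 chi2 at hord; linarith
  -- the key inequality  c * P(T₂ = 1) ≤ P(T₁ = 1)
  have hkey : c * (q (0,1) + q (1,1)) ≤ q (1,0) + q (1,1) := by
    rw [hqval, hqval, hqval]
    rw [hcdef]; unfold chi1
    have hB1 : χ 1 (0,1) + χ 1 (1,1) ≤ 1 := by
      have := hχn 1 (0,0); have := hχn 1 (1,0); have := hrow 1; linarith
    have hA0 : 0 ≤ χ 0 (0,1) + χ 0 (1,1) := by
      have := hχn 0 (0,1); have := hχn 0 (1,1); positivity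
    have hc1' : χ 1 (1,0) + χ 1 (1,1) ≤ 1 := by
      have := hχn 1 (0,0); have := hχn 1 (0,1); linarith [hrow 1]
    have hc0' : 0 ≤ χ 1 (1,0) + χ 1 (1,1) := by
      have := hχn 1 (1,0); have := hχn 1 (1,1); positivity
    have h1 : (χ 1 (1,0) + χ 1 (1,1)) * (χ 0 (0,1) + χ 0 (1,1)) ≤ χ 0 (1,0) + χ 0 (1,1) := by
      have h2 : (χ 1 (1,0) + χ 1 (1,1)) * (χ 0 (0,1) + χ 0 (1,1)) ≤ χ 0 (0,1) + χ 0 (1,1) := by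
        nlinarith [mul_nonneg (sub_nonneg.2 hc1') hA0]
      have := hχn 0 (1,1); linarith
    have h2 : (χ 1 (1,0) + χ 1 (1,1)) * (χ 1 (0,1) + χ 1 (1,1)) ≤ χ 1 (1,0) + χ 1 (1,1) := by
      nlinarith [mul_nonneg hc0' (sub_nonneg.2 hB1)]
    nlinarith [mul_le_mul_of_nonneg_left h1 hπ0, mul_le_mul_of_nonneg_left h2 hπ1]
  set s : ℝ := q (0,0) with hsdef
  have hs0 : 0 ≤ s := hq_nonneg (0,0)
  have hs1 : s ≤ 1 := by
    have := hq_nonneg (0,1); have := hq_nonneg (1,0); have := hq_nonneg (1,1); linarith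
  rcases lt_or_eq_of_le hs1 with hslt | hseq
  · -- nondegenerate case  s < 1
    have h1s : 0 < 1 - s := by linarith
    set p : Fin 3 → ℝ := ![q (1,0)/(1-s), q (0,1)/(1-s), q (1,1)/(1-s)] with hpdef
    have hp0 : p 0 = q (1,0)/(1-s) := rfl
    have hp1 : p 1 = q (0,1)/(1-s) := rfl
    have hp2 : p 2 = q (1,1)/(1-s) := rfl
    have h10 : q (1,0) = (1-s) * p 0 := by rw [hp0]; field_simp
    have h01 : q (0,1) = (1-s) * p 1 := by rw [hp1]; field_simp
    have h11 : q (1,1) = (1-s) * p 2 := by rw [hp2]; field_simp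
    have hp_nonneg : ∀ i, 0 ≤ p i := by
      intro i
      fin_cases i <;>
        simp only [hpdef, Matrix.cons_val_zero, Matrix.cons_val_one, Matrix.head_cons,
          Matrix.cons_val_two, Matrix.tail_cons] <;>
        exact div_nonneg (hq_nonneg _) (le_of_lt h1s)
    have hpsum : p 0 + p 1 + p 2 = 1 := by
      rw [hp0, hp1, hp2]; field_simp; linarith [hq1r, hqsum]
    have hp : IsProb p := by
      constructor
      · intro i
        refine ⟨hp_nonneg i, ?_⟩
        have := hp_nonneg 0; have := hp_nonneg 1; have := hp_nonneg 2
        fin_cases i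
        · show p 0 ≤ 1; linarith [hpsum]
        · show p 1 ≤ 1; linarith [hpsum]
        · show p 2 ≤ 1; linarith [hpsum]
      · rw [Fin.sum_univ_three]; exact hpsum
    -- the confidence bound event inclusion
    have hD0 : 1 - p 0 = (q (0,1) + q (1,1))/(1-s) := by
      rw [hp0]; field_simp; linarith [hq1r, hqsum]
    have hD1 : 1 - p 1 = (q (1,0) + q (1,1))/(1-s) := by
      rw [hp1]; field_simp; linarith [hq1r, hqsum]
    have hcmin : ENNReal.ofReal c ≤
        min (ENNReal.ofReal (1 - p 1) / ENNReal.ofReal (1 - p 0)) 1 := by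
      refine le_min ?_ (by simpa using ENNReal.ofReal_le_one.2 hc1)
      by_cases hden : 1 - p 0 ≤ 0
      · have hp0eq : 1 - p 0 = 0 := le_antisymm hden (by
          rw [hD0]
          have := hq_nonneg (0,1); have := hq_nonneg (1,1); positivity)
        have hq01 : q (0,1) + q (1,1) = 0 := by
          rw [hD0] at hp0eq
          field_simp at hp0eq
          linarith [hq1r, hq_nonneg (0,1), hq_nonneg (1,1)]
        have hp1eq : 1 - p 1 = 1 := by
          rw [hp1]
          have : q (0,1) = 0 := by have := hq_nonneg (0,1); have := hq_nonneg (1,1); linarith [hq1r]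
          rw [this]; simp
        rw [ENNReal.ofReal_eq_zero.2 hden, ENNReal.div_zero]
        · exact le_top
        · rw [hp1eq]; simp
      · push_neg at hden
        rw [ENNReal.le_div_iff_mul_le
            (Or.inl (by rw [ne_eq, ENNReal.ofReal_eq_zero]; linarith))
            (Or.inl ENNReal.ofReal_ne_top),
          ← ENNReal.ofReal_mul hc0]
        apply ENNReal.ofReal_le_ofReal
        rw [hD0, hD1, ← mul_div_assoc]
        rw [div_le_div_iff_of_pos_right h1s]
        exact hkey
    have hB : ∀ m ∈ Finset.range (n+1),
        β ≤ mProb m p {j : Fin 3 → ℕ | ENNReal.ofReal c ≤ u j} := by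
      intro m hm
      rw [Finset.mem_range] at hm
      refine le_trans (hu m (by omega) p hp) (mProb_mono m hp_nonneg ?_)
      intro j hj
      exact le_trans hcmin hj
    have hdec := decomp n q s p hsdef.symm h10 h01 h11 {j : Fin 3 → ℕ | ENNReal.ofReal c ≤ u j}
    have hbin : (∑ m ∈ Finset.range (n+1), (n.choose m : ℝ) * s ^ (n-m) * (1-s) ^ m) = 1 := by
      have h := add_pow (1-s) s n
      rw [show (1-s) + s = 1 by ring, one_pow] at h
      rw [Finset.sum_congr rfl (fun m _ => show (n.choose m : ℝ) * s ^ (n-m) * (1-s) ^ m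
        = (1-s)^m * s^(n-m) * (n.choose m : ℝ) by ring)]
      exact h.symm
    calc β = (∑ m ∈ Finset.range (n+1), (n.choose m : ℝ) * s ^ (n-m) * (1-s) ^ m) * β := by
          rw [hbin, one_mul]
      _ = ∑ m ∈ Finset.range (n+1), (n.choose m : ℝ) * s ^ (n-m) * (1-s) ^ m * β :=
          Finset.sum_mul _ _ _
      _ ≤ ∑ m ∈ Finset.range (n+1), (n.choose m : ℝ) * s ^ (n-m) * (1-s) ^ m *
            mProb m p {j : Fin 3 → ℕ | ENNReal.ofReal c ≤ u j} := by
          apply Finset.sum_le_sum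
          intro m hm
          have hnn : 0 ≤ (n.choose m : ℝ) * s ^ (n-m) * (1-s) ^ m := by positivity
          exact mul_le_mul_of_nonneg_left (hB m hm) hnn
      _ = mProb n q {k | ![k (1, 0), k (0, 1), k (1, 1)] ∈
            {j : Fin 3 → ℕ | ENNReal.ofReal c ≤ u j}} := hdec.symm
      _ = mProb n q {k | ENNReal.ofReal c ≤ u ![k (1, 0), k (0, 1), k (1, 1)]} := rfl
  · -- degenerate case  s = 1 : all observations are (0,0)
    have hq01 : q (0,1) = 0 := by
      have := hq_nonneg (1,0); have := hq_nonneg (1,1); have := hq_nonneg (0,1); linarith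
    have hq10 : q (1,0) = 0 := by
      have := hq_nonneg (0,1); have := hq_nonneg (1,1); have := hq_nonneg (1,0); linarith
    have hq11 : q (1,1) = 0 := by
      have := hq_nonneg (0,1); have := hq_nonneg (1,0); have := hq_nonneg (1,1); linarith
    set p₀ : Fin 3 → ℝ := ![1, 0, 0] with hp₀def
    have hp₀ : IsProb p₀ := by
      constructor
      · intro i
        fin_cases i <;> constructor <;> norm_num [hp₀def]
      · rw [Fin.sum_univ_three]; norm_num [hp₀def] <;> rfl
    have h := hu 0 (Nat.zero_le n) p₀ hp₀
    set z : Fin 3 → ℕ := fun _ => 0 with hzdef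
    have hmin1 : min (ENNReal.ofReal (1 - p₀ 1) / ENNReal.ofReal (1 - p₀ 0)) 1 = 1 := by
      have e1 : p₀ 1 = 0 := rfl
      have e0 : p₀ 0 = 1 := rfl
      rw [e1, e0, sub_zero, sub_self, ENNReal.ofReal_zero, ENNReal.ofReal_one,
        ENNReal.div_zero one_ne_zero]
      exact min_eq_right le_top
    -- compute the trinomial probability with 0 observations
    have hA : mProb 0 p₀ {j | min (ENNReal.ofReal (1 - p₀ 1) / ENNReal.ofReal (1 - p₀ 0)) 1
        ≤ u j} = if (1 : ℝ≥0∞) ≤ u z then 1 else 0 := by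
      rw [mProb_eq_sum 0 0 le_rfl]
      rw [Finset.sum_eq_single z]
      · by_cases hz : (1 : ℝ≥0∞) ≤ u z
        · rw [if_pos hz, Set.indicator_of_mem]
          · show mPMF 0 p₀ z = 1
            simp [mPMF, hzdef]
          · refine ⟨by simp [hzdef], ?_⟩
            show min (ENNReal.ofReal (1 - p₀ 1) / ENNReal.ofReal (1 - p₀ 0)) 1 ≤ u z
            rw [hmin1]; exact hz
        · rw [if_neg hz, Set.indicator_of_notMem]
          rintro ⟨-, hz2⟩
          rw [Set.mem_setOf_eq, hmin1] at hz2
          exact hz hz2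
      · intro k hk hne
        exfalso
        apply hne
        funext i
        have := Fintype.mem_piFinset.mp hk i
        rw [Finset.mem_range] at this
        show k i = 0
        omega
      · intro hz
        exfalso
        apply hz
        rw [Fintype.mem_piFinset]
        intro i
        simp [hzdef]
    rw [hA] at h
    by_cases hle : (1 : ℝ≥0∞) ≤ u z
    · -- the bound at the only possible observation is ≥ 1 ≥ c
      set δ : Fin 2 × Fin 2 → ℕ := fun x => if x = 0 then n else 0 with hδdef
      have hδ00 : δ (0,0) = n := if_pos (by decide)
      have hδ01 : δ (0,1) = 0 := if_neg (by decide)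
      have hδ10 : δ (1,0) = 0 := if_neg (by decide)
      have hδ11 : δ (1,1) = 0 := if_neg (by decide)
      have hδ0 : δ 0 = n := hδ00
      have hδ1 : δ 1 = 0 := hδ11
      have hδsum : (∑ x, δ x) = n := by
        rw [Fintype.sum_prod_type, Fin.sum_univ_two, Fin.sum_univ_two, Fin.sum_univ_two,
          hδ00, hδ01, hδ10, hδ11]
        omega
      have hδtrip : (![δ (1,0), δ (0,1), δ (1,1)] : Fin 3 → ℕ) = z := by
        funext i
        fin_cases i <;> simp [hδ10, hδ01, hδ11, hδ1, hzdef]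
      have hq00 : q (0,0) = 1 := by rw [← hsdef, hseq]
      have hT : mProb n q {k | ENNReal.ofReal c ≤ u ![k (1, 0), k (0, 1), k (1, 1)]} = 1 := by
        rw [mProb_eq_sum n n le_rfl]
        rw [Finset.sum_eq_single δ]
        · rw [Set.indicator_of_mem]
          · show mPMF n q δ = 1
            unfold mPMF
            rw [Fintype.prod_prod_type, Fin.prod_univ_two, Fin.prod_univ_two, Fin.prod_univ_two,
              hδ00, hδ01, hδ10, hδ11, hq00]
            simp only [one_pow, pow_zero, Nat.factorial_zero, Nat.cast_one, div_one, mul_one, one_div]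
            field_simp
          · refine ⟨hδsum, ?_⟩
            show ENNReal.ofReal c ≤ u ![δ (1,0), δ (0,1), δ (1,1)]
            rw [hδtrip]
            exact le_trans (le_trans (ENNReal.ofReal_le_one.2 hc1) hle) le_rfl
        · intro k hk hne
          by_cases hmem : k ∈ {k : Fin 2 × Fin 2 → ℕ | (∑ x, k x) = n ∧
              k ∈ {k : Fin 2 × Fin 2 → ℕ | ENNReal.ofReal c ≤ u ![k (1, 0), k (0, 1), k (1, 1)]}}
          · rw [Set.indicator_of_mem hmem]
            obtain ⟨hsumk, -⟩ := hmem
            have hsum4 : k (0,0) + k (0,1) + (k (1,0) + k (1,1)) = n := by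
              rw [Fintype.sum_prod_type, Fin.sum_univ_two, Fin.sum_univ_two, Fin.sum_univ_two]
                at hsumk
              exact hsumk
            have hex : k (0,1) ≠ 0 ∨ k (1,0) ≠ 0 ∨ k (1,1) ≠ 0 := by
              by_contra hcon
              push_neg at hcon
              obtain ⟨h1, h2, h3⟩ := hcon
              apply hne
              have hk00 : k 0 = k (0,0) := rfl
              have hk11 : k 1 = k (1,1) := rfl
              funext x
              obtain ⟨i, l⟩ := x
              fin_cases i <;> fin_cases l <;> simp [hδdef] <;> omega
            have hfac : ∀ x : Fin 2 × Fin 2, k x ≠ 0 → q x = 0 → mPMF n q k = 0 := by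
              intro x hkx hqx
              unfold mPMF
              rw [Finset.prod_eq_zero (Finset.mem_univ x)
                (by rw [hqx, zero_pow hkx, zero_div]), mul_zero]
            rcases hex with hx | hx | hx
            exacts [hfac _ hx hq01, hfac _ hx hq10, hfac _ hx hq11]
          · exact Set.indicator_of_notMem hmem _
        · intro hδm
          exfalso
          apply hδm
          rw [Fintype.mem_piFinset]
          intro x
          rw [Finset.mem_range]
          by_cases hx : x = 0
          · rw [hδdef]; simp [hx]
          · rw [hδdef]; simp [hx]
      rw [hT]
      rw [if_pos hle] at h
      exact hβ.2
    · rw [if_neg hle] at h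
      exact le_trans h (mProb_nonneg n hq_nonneg _)
end
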